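/- arXiv:2105.02146 — 5 statements merged into one kernel-verified Lean document; each statement's English description precedes it below -/
import Mathlib

section
/- Let F > 0, k > 0, d, t be reals with 2d + t − k > 0, and let S ≥ 0 and S_w ≥ 0 be reals (so that 2d + 2S + t − k > 0). Then F(2(d + S_w) + t − 1)/(k(2(d + S) + t − k)) ≤ F(2d + t − 1)/(k(2d + t − k)) if and only if S_w ≤ ((2d + t − 1)/(2d + t − k))·S. In words: using the base stations reduces the BS-MBCCR repair bandwidth cost below the cost of purely local repair exactly when the weighted base-station download Σ_l w_l r_l is at most w̄ times the unweighted download Σ_l r_l, where w̄ = (2d + t − 1)/(2d + t − k). -/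
/-- Inequality (16): using the base stations reduces the BS-MBCCR repair
bandwidth cost below the purely-local cost iff S_w ≤ w̄·S with
w̄ = (2d+t−1)/(2d+t−k). -/
theorem bs_mbccr_threshold_iff
    (F k d t S Sw : ℝ) (hF : 0 < F) (hk : 0 < k)
    (hpos : 0 < 2 * d + t - k) (hS : 0 ≤ S) (hSw : 0 ≤ Sw) :
    F * (2 * (d + Sw) + t - 1) / (k * (2 * (d + S) + t - k))
        ≤ F * (2 * d + t - 1) / (k * (2 * d + t - k))
      ↔ Sw ≤ ((2 * d + t - 1) / (2 * d + t - k)) * S := by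
  have h1 : 0 < 2 * (d + S) + t - k := by linarith
  have h2 : 0 < k * (2 * (d + S) + t - k) := by positivity
  have h3 : 0 < k * (2 * d + t - k) := by positivity
  rw [div_le_div_iff₀ h2 h3, div_mul_eq_mul_div, le_div_iff₀ hpos]
  constructor <;> intro h <;> nlinarith [mul_pos hF hk, mul_pos (mul_pos hF hk) hpos, mul_pos (mul_pos hF hk) h1]
end

section
/- Let F > 0, k > 0, d, t be reals with d + t − k > 0, and let S ≥ 0 and S_w ≥ 0 be reals (so that d + S + t − k > 0). Then F(d + S_w + t − 1)/(k(d + S + t − k)) ≤ F(d + t − 1)/(k(d + t − k)) if and only if S_w ≤ ((d + t − 1)/(d + t − k))·S. -/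
/-- BS-MSCR analogue of inequality (16): using the base stations reduces the
BS-MSCR repair bandwidth cost below the purely-local cost iff
S_w ≤ ((d+t−1)/(d+t−k))·S. -/
theorem bs_mscr_threshold_iff
    (F k d t S Sw : ℝ) (hF : 0 < F) (hk : 0 < k)
    (hpos : 0 < d + t - k) (hS : 0 ≤ S) (hSw : 0 ≤ Sw) :
    F * (d + Sw + t - 1) / (k * (d + S + t - k))
        ≤ F * (d + t - 1) / (k * (d + t - k))
      ↔ Sw ≤ ((d + t - 1) / (d + t - k)) * S := by
  have h2 : 0 < d + S + t - k := by linarith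
  rw [div_le_div_iff₀ (by positivity) (by positivity),
    div_mul_eq_mul_div, le_div_iff₀ hpos]
  constructor <;> intro h <;> nlinarith [mul_pos hF hk]
end

section
/- (Correctness of one step of Algorithm 1, BS-MBCCR case.) Let F > 0, k > 0, t be reals, let d̄ and b̄ be reals with 2b̄ + t − k > 0, and let w_i ≥ 0 and b_i > 0 be reals. Then F(2(d̄ + w_i b_i) + t − 1)/(k(2(b̄ + b_i) + t − k)) ≤ F(2d̄ + t − 1)/(k(2b̄ + t − k)) if and only if w_i ≤ (2d̄ + t − 1)/(2b̄ + t − k). Hence, including base station i (at its full link capacity b_i) does not increase the BS-MBCCR repair bandwidth cost exactly when its cost w_i does not exceed the threshold w̄_t = (2d̄ + t − 1)/(2b̄ + t − k). -/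
/-- Correctness of one step of Algorithm 1, BS-MBCCR case: adding base
station i at full capacity bᵢ does not increase the BS-MBCCR cost iff
wᵢ ≤ (2d̄ + t − 1)/(2b̄ + t − k). -/
theorem algorithm1_step_mbccr
    (F k t dbar bbar wi bi : ℝ) (hF : 0 < F) (hk : 0 < k)
    (hpos : 0 < 2 * bbar + t - k) (hwi : 0 ≤ wi) (hbi : 0 < bi) :
    F * (2 * (dbar + wi * bi) + t - 1) / (k * (2 * (bbar + bi) + t - k))
        ≤ F * (2 * dbar + t - 1) / (k * (2 * bbar + t - k))
      ↔ wi ≤ (2 * dbar + t - 1) / (2 * bbar + t - k) := by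
  have h2 : 0 < 2 * (bbar + bi) + t - k := by linarith
  rw [div_le_div_iff₀ (by positivity) (by positivity), le_div_iff₀ hpos]
  constructor <;> intro h
  · nlinarith [mul_pos (mul_pos hF hk) hbi]
  · nlinarith [mul_nonneg (mul_nonneg (mul_nonneg hF.le hk.le) hbi.le) (sub_nonneg.2 h)]
end

section
/- (Correctness of one step of Algorithm 1, BS-MSCR case.) Let F > 0, k > 0, t be reals, let d̄ and b̄ be reals with b̄ + t − k > 0, and let w_i ≥ 0 and b_i > 0 be reals. Then F(d̄ + w_i b_i + t − 1)/(k(b̄ + b_i + t − k)) ≤ F(d̄ + t − 1)/(k(b̄ + t − k)) if and only if w_i ≤ (d̄ + t − 1)/(b̄ + t − k). Hence, including base station i (at its full link capacity b_i) does not increase the BS-MSCR repair bandwidth cost exactly when its cost w_i does not exceed the threshold w̄_t = (d̄ + t − 1)/(b̄ + t − k). -/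
/-- Correctness of one step of Algorithm 1, BS-MSCR case: adding base
station i at full capacity bᵢ does not increase the BS-MSCR cost iff
wᵢ ≤ (d̄ + t − 1)/(b̄ + t − k). -/
theorem algorithm1_step_mscr
    (F k t dbar bbar wi bi : ℝ) (hF : 0 < F) (hk : 0 < k)
    (hpos : 0 < bbar + t - k) (hwi : 0 ≤ wi) (hbi : 0 < bi) :
    F * (dbar + wi * bi + t - 1) / (k * (bbar + bi + t - k))
        ≤ F * (dbar + t - 1) / (k * (bbar + t - k))
      ↔ wi ≤ (dbar + t - 1) / (bbar + t - k) := by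
  rw [div_le_div_iff₀ (mul_pos hk (by linarith)) (by positivity), le_div_iff₀ hpos]
  constructor <;> intro h <;> nlinarith [mul_pos (mul_pos hF hk) hbi]
end

section
/- (Feasibility of the BS-MSCR point.) Let F > 0 be real, let k ≥ 1 and t ≥ 1 be integers, let d′ be a real with d′ + t − k > 0, and set α = F/k and β = β′ = F/(k(d′ + t − k)). Then for every integer g with 0 ≤ g ≤ k, the file-size constraint F ≤ α(k − g) + gβ(d′ − k + g/2) + β′gt + ψ_{g,t}·(β/2 − β′) holds, where ψ_{g,t} = ⌊g/t⌋t² + (g − ⌊g/t⌋t)². Moreover, it holds with equality whenever g ≤ t. -/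
/-- Feasibility of the BS-MSCR point: with α = F/k and
β = β′ = F/(k(d′ + t − k)), the file-size constraint
F ≤ α(k − g) + gβ(d′ − k + g/2) + β′gt + ψ_{g,t}(β/2 − β′)
holds for every 0 ≤ g ≤ k, with equality whenever g ≤ t. -/
theorem bs_mscr_feasibility
    (F : ℝ) (hF : 0 < F) (k t : ℕ) (hk : 1 ≤ k) (ht : 1 ≤ t)
    (d' : ℝ) (hpos : 0 < d' + t - k)
    (α β β' : ℝ)
    (hα : α = F / k)
    (hβ : β = F / (k * (d' + t - k)))
    (hβ' : β' = F / (k * (d' + t - k))) :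
    ∀ g : ℕ, g ≤ k →
      (F ≤ α * (k - g) + g * β * (d' - k + g / 2) + β' * g * t
            + ((g / t) * t ^ 2 + (g - t * (g / t)) ^ 2 : ℕ) * (β / 2 - β')) ∧
      (g ≤ t →
        F = α * (k - g) + g * β * (d' - k + g / 2) + β' * g * t
            + ((g / t) * t ^ 2 + (g - t * (g / t)) ^ 2 : ℕ) * (β / 2 - β')) := by
  intro g hg
  subst hα hβ hβ'
  have hk0 : (k : ℝ) ≠ 0 := by positivity
  have hD : d' + t - k ≠ 0 := ne_of_gt hpos
  have hmod : g - t * (g / t) = g % t := (Nat.mod_def g t).symm ▸ rfl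
  set ψ : ℕ := (g / t) * t ^ 2 + (g - t * (g / t)) ^ 2 with hψ
  -- key identity: RHS = F + F * (g^2 - ψ) / (2 k D)
  have key : F / k * (k - g) + g * (F / (k * (d' + t - k))) * (d' - k + g / 2)
      + F / (k * (d' + t - k)) * g * t
      + (ψ : ℝ) * (F / (k * (d' + t - k)) / 2 - F / (k * (d' + t - k)))
      = F + F * ((g : ℝ) ^ 2 - ψ) / (2 * k * (d' + t - k)) := by
    field_simp
    ring
  constructor
  · rw [key]
    have hle : ψ ≤ g ^ 2 := by
      rw [hψ, hmod]
      have hq : g / t ≤ (g / t) ^ 2 := Nat.le_self_pow two_ne_zero _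
      have h1 : g / t * t ^ 2 ≤ (g / t) ^ 2 * t ^ 2 :=
        Nat.mul_le_mul_right _ hq
      have h2 : g ^ 2 = (g / t) ^ 2 * t ^ 2 + 2 * (t * (g / t)) * (g % t) + (g % t) ^ 2 := by
        conv_lhs => rw [← Nat.div_add_mod g t]
        ring
      omega
    have : (0:ℝ) ≤ F * ((g : ℝ) ^ 2 - ψ) / (2 * k * (d' + t - k)) := by
      apply div_nonneg
      · have : (ψ : ℝ) ≤ (g : ℝ) ^ 2 := by exact_mod_cast hle
        nlinarith
      · positivity
    linarith
  · intro hgt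
    rw [key]
    have heq : ψ = g ^ 2 := by
      rw [hψ]
      rcases lt_or_eq_of_le hgt with h | h
      · simp [Nat.div_eq_of_lt h]
      · subst h
        simp [Nat.div_self (show 0 < g by omega)]
    rw [heq]
    push_cast
    ring
end
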